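/- There is no binary systematic code of length n = d + k - 1, dimension k ≥ 2, and minimum distance d = 3. Equivalently, every binary systematic code with k ≥ 2 and d = 3 satisfies n ≥ d + k. -/

import Mathlib

open Finset

/-- `C` has minimum (Hamming) distance exactly `d`. -/
def minDistIs {n : ℕ} {A : Type*} [DecidableEq A] (C : Finset (Fin n → A)) (d : ℕ) : Prop :=
  (∀ x ∈ C, ∀ y ∈ C, x ≠ y → d ≤ hammingDist x y) ∧
    ∃ x ∈ C, ∃ y ∈ C, x ≠ y ∧ hammingDist x y = d

/-- `C` is systematic: projection onto the first `k` coordinates is a bijection onto `A^k`. -/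
def systematicOn {n k : ℕ} {A : Type*} (h : k ≤ n) (C : Finset (Fin n → A)) : Prop :=
  Set.BijOn (fun c (i : Fin k) => c (Fin.castLE h i)) (C : Set (Fin n → A)) Set.univ

/-- The Griesmer sum `∑_{j=0}^{k-1} ⌈d / q^j⌉`. -/
def griesmerSum (q d k : ℕ) : ℤ := ∑ j ∈ Finset.range k, ⌈(d : ℚ) / (q : ℚ) ^ j⌉

lemma card_lt_filter {n m : ℕ} (h : m ≤ n) :
    ((univ : Finset (Fin n)).filter (fun i : Fin n => (i : ℕ) < m)).card = m := by
  have : (univ : Finset (Fin n)).filter (fun i : Fin n => (i : ℕ) < m)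
      = (univ : Finset (Fin m)).map (Fin.castLEEmb h) := by
    ext i
    simp only [mem_filter, mem_univ, true_and, mem_map]
    constructor
    · intro hi
      exact ⟨⟨i, hi⟩, by simp [Fin.castLEEmb, Fin.castLE, Fin.ext_iff]⟩
    · rintro ⟨j, _, rfl⟩
      simpa using j.isLt
  rw [this, card_map, card_univ, Fintype.card_fin]

theorem stmt5 {n k : ℕ}
    (C : Finset (Fin n → Fin 2)) (hk : 2 ≤ k) (hkn : k ≤ n)
    (hcard : C.card = 2 ^ k)
    (hsys : systematicOn hkn C)
    (hmin : minDistIs C 3) :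
    n ≥ 3 + k := by
  by_contra hlt
  push_neg at hlt
  -- obtain codewords with prescribed prefixes
  obtain ⟨x, hxC, hxp⟩ := hsys.surjOn (Set.mem_univ (0 : Fin k → Fin 2))
  obtain ⟨y, hyC, hyp⟩ := hsys.surjOn
    (Set.mem_univ (fun j : Fin k => if (j : ℕ) = 0 then (1 : Fin 2) else 0))
  obtain ⟨z, hzC, hzp⟩ := hsys.surjOn
    (Set.mem_univ (fun j : Fin k => if (j : ℕ) = 1 then (1 : Fin 2) else 0))
  have px : ∀ i : Fin n, (i : ℕ) < k → x i = 0 := by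
    intro i hi
    have := congrFun hxp ⟨(i : ℕ), hi⟩
    simpa [Fin.castLE] using this
  have py : ∀ i : Fin n, (i : ℕ) < k → y i = if (i : ℕ) = 0 then 1 else 0 := by
    intro i hi
    have := congrFun hyp ⟨(i : ℕ), hi⟩
    simpa [Fin.castLE, Fin.ext_iff] using this
  have pz : ∀ i : Fin n, (i : ℕ) < k → z i = if (i : ℕ) = 1 then 1 else 0 := by
    intro i hi
    have := congrFun hzp ⟨(i : ℕ), hi⟩
    simpa [Fin.castLE, Fin.ext_iff] using this
  set i0 : Fin n := ⟨0, by omega⟩ with hi0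
  set i1 : Fin n := ⟨1, by omega⟩ with hi1
  have hxy : x ≠ y := by
    intro h
    have h1 : x i0 = 0 := px i0 (by simp [hi0]; omega)
    have h2 : y i0 = 1 := by rw [py i0 (by simp [hi0]; omega)]; simp [hi0]
    rw [h] at h1; rw [h1] at h2; exact absurd h2 (by decide)
  have hxz : x ≠ z := by
    intro h
    have h1 : x i1 = 0 := px i1 (by simp [hi1]; omega)
    have h2 : z i1 = 1 := by rw [pz i1 (by simp [hi1]; omega)]; simp [hi1]
    rw [h] at h1; rw [h1] at h2; exact absurd h2 (by decide)
  have hyz : y ≠ z := by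
    intro h
    have h1 : y i0 = 1 := by rw [py i0 (by simp [hi0]; omega)]; simp [hi0]
    have h2 : z i0 = 0 := by rw [pz i0 (by simp [hi0]; omega)]; simp [hi0]
    rw [h] at h1; rw [h1] at h2; exact absurd h2 (by decide)
  have dxy := hmin.1 x hxC y hyC hxy
  have dxz := hmin.1 x hxC z hzC hxz
  have dyz := hmin.1 y hyC z hzC hyz
  set t : Fin n → ℕ := fun i =>
    (if x i ≠ y i then 1 else 0) + (if x i ≠ z i then 1 else 0) + (if y i ≠ z i then 1 else 0)
    with ht
  have hsum9 : 9 ≤ ∑ i : Fin n, t i := by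
    have e1 : hammingDist x y = ∑ i : Fin n, (if x i ≠ y i then 1 else 0) :=
      Finset.card_filter _ _
    have e2 : hammingDist x z = ∑ i : Fin n, (if x i ≠ z i then 1 else 0) :=
      Finset.card_filter _ _
    have e3 : hammingDist y z = ∑ i : Fin n, (if y i ≠ z i then 1 else 0) :=
      Finset.card_filter _ _
    have : ∑ i : Fin n, t i = hammingDist x y + hammingDist x z + hammingDist y z := by
      rw [e1, e2, e3, ht, ← Finset.sum_add_distrib, ← Finset.sum_add_distrib]
    omega
  have hub : ∑ i : Fin n, t i ≤ 4 + 2 * (n - k) := by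
    rw [← Finset.sum_filter_add_sum_filter_not univ (fun i : Fin n => (i : ℕ) < k) t]
    have h1 : ∑ i ∈ univ.filter (fun i : Fin n => (i : ℕ) < k), t i ≤ 4 := by
      calc ∑ i ∈ univ.filter (fun i : Fin n => (i : ℕ) < k), t i
          ≤ ∑ i ∈ univ.filter (fun i : Fin n => (i : ℕ) < k),
              (if (i : ℕ) < 2 then 2 else 0) := by
            apply Finset.sum_le_sum
            intro i hi
            have hik : (i : ℕ) < k := (Finset.mem_filter.mp hi).2
            rw [ht]
            simp only [px i hik, py i hik, pz i hik]
            rcases Nat.lt_or_ge (i : ℕ) 2 with h2 | h2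
            · interval_cases h : (i : ℕ) <;> simp
            · have h0 : ¬ (i : ℕ) = 0 := by omega
              have h1 : ¬ (i : ℕ) = 1 := by omega
              simp [h0, h1, h2]
        _ ≤ ∑ i : Fin n, (if (i : ℕ) < 2 then 2 else 0) :=
            Finset.sum_le_sum_of_subset (Finset.filter_subset _ _)
        _ = 4 := by
            rw [← Finset.sum_filter]
            rw [Finset.sum_const, card_lt_filter (by omega : 2 ≤ n), smul_eq_mul]
    have h2 : ∑ i ∈ univ.filter (fun i : Fin n => ¬ (i : ℕ) < k), t i ≤ 2 * (n - k) := by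
      have hcard2 : (univ.filter (fun i : Fin n => ¬ (i : ℕ) < k)).card = n - k := by
        have := Finset.card_filter_add_card_filter_not
          (s := (univ : Finset (Fin n))) (p := fun i : Fin n => (i : ℕ) < k)
        rw [card_lt_filter hkn, Finset.card_univ, Fintype.card_fin] at this
        omega
      calc ∑ i ∈ univ.filter (fun i : Fin n => ¬ (i : ℕ) < k), t i
          ≤ ∑ _i ∈ univ.filter (fun i : Fin n => ¬ (i : ℕ) < k), 2 := by
            apply Finset.sum_le_sum
            intro i _
            rw [ht]
            have h3 : x i = y i ∨ x i = z i ∨ y i = z i := by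
              have a1 := (x i).isLt
              have a2 := (y i).isLt
              have a3 := (z i).isLt
              rw [Fin.ext_iff, Fin.ext_iff, Fin.ext_iff]
              omega
            rcases h3 with h | h | h <;> simp [h] <;> split_ifs <;> omega
        _ = 2 * (n - k) := by rw [Finset.sum_const, hcard2]; ring
    omega
  omega
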